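/- On a rectangular m×n board with k non-bonding 1×1 tiles, after a tilt in direction W, the tiles in each row are packed to the left: if a row contains j tiles, they occupy exactly the columns 1, 2, ..., j of that row. -/
import Mathlib


open scoped Classical

/-- The four cardinal directions as unit vectors: N, E, S, W. -/
def Dirs : Finset (ℤ × ℤ) := {(0,1), (1,0), (0,-1), (-1,0)}

/-- Some tile of the configuration `f` occupies position `p`. -/
def Occupied {k : ℕ} (f : Fin k → ℤ × ℤ) (p : ℤ × ℤ) : Prop := ∃ i, f i = p

/-- A tile at position `p` can move one unit in direction `d`: there is some `j ≥ 1`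
such that the cells `p + d, …, p + j·d` are open, the cells strictly before `p + j·d`
are occupied (those tiles move as well), and `p + j·d` is free. -/
def Movable {k : ℕ} (O : Finset (ℤ × ℤ)) (f : Fin k → ℤ × ℤ) (d p : ℤ × ℤ) : Prop :=
  ∃ j : ℕ, 1 ≤ j ∧ (∀ i : ℕ, 1 ≤ i → i ≤ j → p + (i : ℤ) • d ∈ O) ∧
    (∀ i : ℕ, 1 ≤ i → i < j → Occupied f (p + (i : ℤ) • d)) ∧
    ¬ Occupied f (p + (j : ℤ) • d)

/-- One step: every movable tile advances one unit in direction `d`. -/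
noncomputable def mstep {k : ℕ} (O : Finset (ℤ × ℤ)) (d : ℤ × ℤ)
    (f : Fin k → ℤ × ℤ) : Fin k → ℤ × ℤ :=
  fun i => if Movable O f d (f i) then f i + d else f i

/-- A tilt: iterate steps until no tile can move (enough iterations for a fixpoint). -/
noncomputable def mtilt {k : ℕ} (O : Finset (ℤ × ℤ)) (d : ℤ × ℤ)
    (f : Fin k → ℤ × ℤ) : Fin k → ℤ × ℤ :=
  (mstep O d)^[O.card * k + 1] f

lemma shift_eq (p d : ℤ × ℤ) (i : ℕ) :
    p + d + (i : ℤ) • d = p + ((i + 1 : ℕ) : ℤ) • d := by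
  push_cast
  rw [add_smul, one_smul]
  abel

lemma one_shift (p d : ℤ × ℤ) : p + ((1:ℕ) : ℤ) • d = p + d := by norm_num

lemma west_smul (p : ℤ × ℤ) (c : ℤ) :
    p + c • ((-1, 0) : ℤ × ℤ) = (p.1 - c, p.2) := by
  have h : c • ((-1, 0) : ℤ × ℤ) = (-c, 0) := by
    rw [Prod.smul_mk]
    simp
  rw [h, Prod.ext_iff]
  constructor <;> simp <;> ring

lemma movable_shift {k : ℕ} {O : Finset (ℤ × ℤ)} {f : Fin k → ℤ × ℤ} {d p : ℤ × ℤ}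
    (h : Movable O f d p) (hocc : Occupied f (p + d)) : Movable O f d (p + d) := by
  obtain ⟨j, hj1, hO, hOcc, hfree⟩ := h
  have hj2 : 2 ≤ j := by
    by_contra hlt
    have hj : j = 1 := by omega
    subst hj
    rw [one_shift] at hfree
    exact hfree hocc
  refine ⟨j - 1, by omega, ?_, ?_, ?_⟩
  · intro i h1 h2
    rw [shift_eq]
    exact hO (i+1) (by omega) (by omega)
  · intro i h1 h2
    rw [shift_eq]
    exact hOcc (i+1) (by omega) (by omega)
  · rw [shift_eq]
    have hh : j - 1 + 1 = j := by omega
    rw [hh]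
    exact hfree

lemma mstep_injective {k : ℕ} {O : Finset (ℤ × ℤ)} {d : ℤ × ℤ} {f : Fin k → ℤ × ℤ}
    (hinj : Function.Injective f) : Function.Injective (mstep O d f) := by
  intro i i' h
  unfold mstep at h
  split_ifs at h with h1 h2 h2
  · exact hinj (add_right_cancel h)
  · exact absurd (h ▸ movable_shift h1 ⟨i', h.symm⟩) h2
  · exact absurd (h.symm ▸ movable_shift h2 ⟨i, h⟩) h1
  · exact hinj h

lemma mstep_mem {k : ℕ} {O : Finset (ℤ × ℤ)} {d : ℤ × ℤ} {f : Fin k → ℤ × ℤ}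
    (hin : ∀ i, f i ∈ O) : ∀ i, mstep O d f i ∈ O := by
  intro i
  unfold mstep
  split_ifs with h1
  · obtain ⟨j, hj, hO, -, -⟩ := h1
    have := hO 1 le_rfl hj
    rwa [one_shift] at this
  · exact hin i

def meas {k : ℕ} (f : Fin k → ℤ × ℤ) : ℕ := ∑ i, ((f i).1 - 1).toNat

lemma mstep_dec {k : ℕ} {O : Finset (ℤ × ℤ)} {f : Fin k → ℤ × ℤ}
    (hO1 : ∀ p ∈ O, 1 ≤ p.1)
    (h : mstep O (-1,0) f ≠ f) : meas (mstep O (-1,0) f) < meas f := by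
  have hex : ∃ i, mstep O (-1,0) f i ≠ f i := by
    by_contra hc
    push_neg at hc
    exact h (funext hc)
  obtain ⟨i, hi⟩ := hex
  have hmov : Movable O f (-1,0) (f i) := by
    by_contra hm
    exact hi (if_neg hm)
  have htarget : f i + (-1,0) ∈ O := by
    obtain ⟨j, hj, hOj, -, -⟩ := hmov
    have := hOj 1 le_rfl hj
    rwa [one_shift] at this
  have hx2 : 2 ≤ (f i).1 := by
    have := hO1 _ htarget
    simp only [Prod.fst_add] at this
    omega
  unfold meas
  apply Finset.sum_lt_sum
  · intro j _
    unfold mstep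
    split_ifs with hj
    · simp only [Prod.fst_add]
      apply Int.toNat_le_toNat
      omega
    · exact le_rfl
  · refine ⟨i, Finset.mem_univ i, ?_⟩
    unfold mstep
    rw [if_pos hmov]
    simp only [Prod.fst_add]
    omega

lemma iter_fix {α : Type*} (F : α → α) (μ : α → ℕ)
    (h : ∀ a, F a ≠ a → μ (F a) < μ a) :
    ∀ N : ℕ, ∀ a : α, μ a ≤ N → F (F^[N] a) = F^[N] a := by
  intro N
  induction N with
  | zero =>
    intro a ha
    simp only [Function.iterate_zero, id]
    by_contra hne
    have := h a hne
    omega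
  | succ N ih =>
    intro a ha
    by_cases hfa : F a = a
    · rw [Function.iterate_fixed hfa]
      exact hfa
    · rw [Function.iterate_succ_apply]
      exact ih (F a) (by have := h a hfa; omega)

lemma packed_set (S : Finset ℤ) (h1 : ∀ x ∈ S, 1 ≤ x)
    (h2 : ∀ x ∈ S, 2 ≤ x → x - 1 ∈ S) :
    S = Finset.Icc 1 (S.card : ℤ) := by
  rcases S.eq_empty_or_nonempty with h | h
  · subst h; simp
  · have hM := S.max'_mem h
    set M := S.max' h with hMdef
    have hsub : ∀ t : ℕ, ∀ x ∈ S, x ≤ (t:ℤ) → Finset.Icc 1 x ⊆ S := by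
      intro t
      induction t with
      | zero =>
        intro x hx hle z hz
        exfalso
        rw [Finset.mem_Icc] at hz
        omega
      | succ t ih =>
        intro x hx hle z hz
        rw [Finset.mem_Icc] at hz
        rcases eq_or_lt_of_le hz.2 with hzx | hzx
        · exact hzx ▸ hx
        · have hx2 : 2 ≤ x := by omega
          have hx1 : x - 1 ∈ S := h2 x hx hx2
          exact ih (x-1) hx1 (by omega) (Finset.mem_Icc.mpr ⟨hz.1, by omega⟩)
    have h1M : 1 ≤ M := h1 M hM
    have hSM : S = Finset.Icc 1 M := by
      apply Finset.Subset.antisymm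
      · intro x hx
        exact Finset.mem_Icc.mpr ⟨h1 x hx, S.le_max' x hx⟩
      · exact hsub M.toNat M hM (by omega)
    have hcard : (S.card : ℤ) = M := by
      rw [hSM, Int.card_Icc]
      omega
    rw [hcard]
    exact hSM

/-- after a tilt west on a rectangular board, the tiles of each row
occupy exactly the columns `1, …, j` where `j` is the number of tiles in that row. -/
theorem tiltW_packs_left (m n : ℕ) (k : ℕ) (f : Fin k → ℤ × ℤ)
    (hinj : Function.Injective f)
    (hin : ∀ i, f i ∈ Finset.Icc (1:ℤ) (m:ℤ) ×ˢ Finset.Icc (1:ℤ) (n:ℤ)) :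
    let O : Finset (ℤ × ℤ) := Finset.Icc (1:ℤ) (m:ℤ) ×ˢ Finset.Icc (1:ℤ) (n:ℤ)
    let g := mtilt O ((-1,0) : ℤ × ℤ) f
    ∀ y : ℤ,
      (Finset.univ.filter fun i => (g i).2 = y).image (fun i => (g i).1) =
        Finset.Icc (1:ℤ) ((Finset.univ.filter fun i => (g i).2 = y).card : ℤ) := by
  intro O g y
  have hOdef : O = Finset.Icc (1:ℤ) (m:ℤ) ×ˢ Finset.Icc (1:ℤ) (n:ℤ) := rfl
  have hgdef : g = (mstep O ((-1,0) : ℤ × ℤ))^[O.card * k + 1] f := rfl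
  have hO1 : ∀ p ∈ O, 1 ≤ p.1 := by
    intro p hp
    rw [hOdef, Finset.mem_product, Finset.mem_Icc, Finset.mem_Icc] at hp
    exact hp.1.1
  -- invariants along the iteration
  have hinv : ∀ j : ℕ, Function.Injective ((mstep O ((-1,0):ℤ×ℤ))^[j] f) ∧
      (∀ i, (mstep O ((-1,0):ℤ×ℤ))^[j] f i ∈ O) := by
    intro j
    induction j with
    | zero => exact ⟨hinj, fun i => by rw [hOdef]; exact hin i⟩
    | succ j ih =>
      rw [Function.iterate_succ_apply']
      exact ⟨mstep_injective ih.1, mstep_mem ih.2⟩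
  -- measure bound
  have hbound : meas f ≤ O.card * k := by
    have hcardO : O.card = m * n := by
      rw [hOdef, Finset.card_product, Int.card_Icc, Int.card_Icc]
      have h1 : ((m:ℤ) + 1 - 1).toNat = m := by omega
      have h2 : ((n:ℤ) + 1 - 1).toNat = n := by omega
      rw [h1, h2]
    have key : ∀ i : Fin k, ((f i).1 - 1).toNat ≤ m * n := by
      intro i
      have hi := hin i
      rw [Finset.mem_product, Finset.mem_Icc, Finset.mem_Icc] at hi
      have hn : 1 ≤ n := by
        have := le_trans hi.2.1 hi.2.2
        exact_mod_cast this
      have hm : m ≤ m * n := Nat.le_mul_of_pos_right _ hn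
      have hx := hi.1.2
      omega
    have hsum : meas f ≤ Finset.univ.card • (m * n) :=
      Finset.sum_le_card_nsmul Finset.univ _ (m * n) (fun i _ => key i)
    simp only [Finset.card_univ, Fintype.card_fin, smul_eq_mul] at hsum
    rw [hcardO, Nat.mul_comm]
    exact hsum
  have hfix0 : mstep O ((-1,0):ℤ×ℤ) ((mstep O ((-1,0):ℤ×ℤ))^[O.card * k] f)
      = (mstep O ((-1,0):ℤ×ℤ))^[O.card * k] f :=
    iter_fix _ meas (fun a ha => mstep_dec hO1 ha) _ f hbound
  have hg2 : g = (mstep O ((-1,0):ℤ×ℤ))^[O.card * k] f := by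
    rw [hgdef, Function.iterate_succ_apply', hfix0]
  have hgfix : mstep O ((-1,0):ℤ×ℤ) g = g := by
    rw [hg2]; exact hfix0
  have hginj : Function.Injective g := by rw [hg2]; exact (hinv _).1
  have hgin : ∀ i, g i ∈ O := by rw [hg2]; exact (hinv _).2
  -- at the fixpoint, no tile is movable
  have hnm : ∀ i, ¬ Movable O g ((-1,0):ℤ×ℤ) (g i) := by
    intro i hm
    have h := congrFun hgfix i
    unfold mstep at h
    rw [if_pos hm] at h
    have h1 : (g i).1 + (-1 : ℤ) = (g i).1 := by
      have := congrArg Prod.fst h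
      simpa using this
    omega
  -- occupancy of the west neighbor
  have hocc : ∀ i, 2 ≤ (g i).1 → Occupied g ((g i).1 - 1, (g i).2) := by
    intro i h2
    by_contra hno
    apply hnm i
    refine ⟨1, le_rfl, ?_, ?_, ?_⟩
    · intro c hc1 hc2
      have hc : c = 1 := by omega
      subst hc
      have : g i + ((1:ℕ):ℤ) • ((-1,0):ℤ×ℤ) = ((g i).1 - 1, (g i).2) := by
        rw [west_smul]
        norm_num
      rw [this, hOdef, Finset.mem_product, Finset.mem_Icc, Finset.mem_Icc]
      have hi := hgin i
      rw [hOdef, Finset.mem_product, Finset.mem_Icc, Finset.mem_Icc] at hi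
      exact ⟨⟨by omega, by omega⟩, hi.2⟩
    · intro c hc1 hc2
      omega
    · have : g i + ((1:ℕ):ℤ) • ((-1,0):ℤ×ℤ) = ((g i).1 - 1, (g i).2) := by
        rw [west_smul]
        norm_num
      rw [this]
      exact hno
  -- the set of column indices in row y
  set S := (Finset.univ.filter fun i => (g i).2 = y).image (fun i => (g i).1) with hSdef
  have h1 : ∀ x ∈ S, 1 ≤ x := by
    intro x hx
    rw [hSdef, Finset.mem_image] at hx
    obtain ⟨i, -, rfl⟩ := hx
    have hi := hgin i
    rw [hOdef, Finset.mem_product, Finset.mem_Icc, Finset.mem_Icc] at hi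
    exact hi.1.1
  have h2 : ∀ x ∈ S, 2 ≤ x → x - 1 ∈ S := by
    intro x hx h2x
    rw [hSdef, Finset.mem_image] at hx
    obtain ⟨i, hiT, rfl⟩ := hx
    rw [Finset.mem_filter] at hiT
    obtain ⟨i', hi'⟩ := hocc i h2x
    rw [hSdef, Finset.mem_image]
    refine ⟨i', Finset.mem_filter.mpr ⟨Finset.mem_univ _, ?_⟩, ?_⟩
    · rw [hi']
      exact hiT.2
    · rw [hi']
  have hcard : S.card = (Finset.univ.filter fun i => (g i).2 = y).card := by
    rw [hSdef]
    apply Finset.card_image_of_injOn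
    intro a ha b hb hab
    rw [Finset.mem_coe, Finset.mem_filter] at ha hb
    apply hginj
    exact Prod.ext_iff.mpr ⟨hab, ha.2.trans hb.2.symm⟩
  have := packed_set S h1 h2
  rw [hcard] at this
  exact this
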